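/- (Ertel's theorem.) Let u, w : ℝ × ℝ³ → ℝ³ be C¹ and θ : ℝ × ℝ³ → ℝ be C². If w is frozen into the flow of u, i.e. ∂ₜw + (u·∇)w = (w·∇)u pointwise, then for all (t,x): ∂ₜ(w·∇θ) + (u·∇)(w·∇θ) = (w·∇)(∂ₜθ + (u·∇)θ); that is, the material derivative D/Dt = ∂ₜ + u·∇ commutes with the directional derivative w·∇ in the sense D/Dt(w·∇θ) = w·∇(Dθ/Dt). -/

import Mathlib

noncomputable section

/-- Space-time: a point is a pair (t, x) with t ∈ ℝ, x ∈ ℝ³. -/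
abbrev Pt : Type := ℝ × (Fin 3 → ℝ)

/-- Material derivative `∂ₜ f + (a·∇)f` of a scalar field `f` along the
velocity field `a`, at the point `z`. -/
def mder (a : Pt → Fin 3 → ℝ) (f : Pt → ℝ) (z : Pt) : ℝ :=
  fderiv ℝ f z ((1 : ℝ), a z)

/-- Directional (spatial) derivative `(a·∇)f` of a scalar field `f`. -/
def sder (a : Pt → Fin 3 → ℝ) (f : Pt → ℝ) (z : Pt) : ℝ :=
  fderiv ℝ f z ((0 : ℝ), a z)

/-- Ertel's theorem: if `w` is frozen into the flow of `u`,
i.e. `∂ₜw + (u·∇)w = (w·∇)u`, then for any C² scalar `θ`,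
`D/Dt (w·∇θ) = w·∇(Dθ/Dt)` where `D/Dt = ∂ₜ + u·∇`. -/
theorem ertel_theorem
    (u w : Pt → Fin 3 → ℝ) (θ : Pt → ℝ)
    (hu : ContDiff ℝ 1 u) (hw : ContDiff ℝ 1 w) (hθ : ContDiff ℝ 2 θ)
    (hfrozen : ∀ z i, mder u (fun q => w q i) z = sder w (fun q => u q i) z) :
    ∀ z, mder u (fun q => sder w θ q) z = sder w (fun q => mder u θ q) z := by
  intro z
  set g : Pt → (Pt →L[ℝ] ℝ) := fderiv ℝ θ with hgdef
  have hg : ContDiff ℝ 1 g := hθ.fderiv_right (by norm_num)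
  have hgd : Differentiable ℝ g := hg.differentiable (by norm_num)
  have hθd : Differentiable ℝ θ := hθ.differentiable (by norm_num)
  have hwd : Differentiable ℝ w := hw.differentiable (by norm_num)
  have hud : Differentiable ℝ u := hu.differentiable (by norm_num)
  have hW : HasFDerivAt (fun q : Pt => ((0:ℝ), w q))
      (((0 : Pt →L[ℝ] ℝ)).prod (fderiv ℝ w z)) z :=
    HasFDerivAt.prodMk (hasFDerivAt_const (0:ℝ) z) (hwd z).hasFDerivAt
  have hU : HasFDerivAt (fun q : Pt => ((1:ℝ), u q))
      (((0 : Pt →L[ℝ] ℝ)).prod (fderiv ℝ u z)) z :=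
    HasFDerivAt.prodMk (hasFDerivAt_const (1:ℝ) z) (hud z).hasFDerivAt
  have hcompw : ∀ (i : Fin 3) (v : Pt),
      fderiv ℝ (fun q => w q i) z v = fderiv ℝ w z v i := by
    intro i v
    have : fderiv ℝ (fun q => w q i) z =
        (ContinuousLinearMap.proj i : (Fin 3 → ℝ) →L[ℝ] ℝ).comp (fderiv ℝ w z) :=
      (((ContinuousLinearMap.proj i : (Fin 3 → ℝ) →L[ℝ] ℝ).hasFDerivAt).comp z
        (hwd z).hasFDerivAt).fderiv
    rw [this]; rfl
  have hcompu : ∀ (i : Fin 3) (v : Pt),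
      fderiv ℝ (fun q => u q i) z v = fderiv ℝ u z v i := by
    intro i v
    have : fderiv ℝ (fun q => u q i) z =
        (ContinuousLinearMap.proj i : (Fin 3 → ℝ) →L[ℝ] ℝ).comp (fderiv ℝ u z) :=
      (((ContinuousLinearMap.proj i : (Fin 3 → ℝ) →L[ℝ] ℝ).hasFDerivAt).comp z
        (hud z).hasFDerivAt).fderiv
    rw [this]; rfl
  have hfz : fderiv ℝ w z ((1:ℝ), u z) = fderiv ℝ u z ((0:ℝ), w z) := by
    funext i
    have h := hfrozen z i
    simp only [mder, sder] at h
    rw [← hcompw i, ← hcompu i]; exact h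
  have hLHS : mder u (fun q => sder w θ q) z
      = fderiv ℝ g z ((1:ℝ), u z) ((0:ℝ), w z)
        + g z ((0:ℝ), fderiv ℝ w z ((1:ℝ), u z)) := by
    have hfd := (hgd z).hasFDerivAt.clm_apply hW
    rw [mder]
    show fderiv ℝ (fun q => g q ((0:ℝ), w q)) z ((1:ℝ), u z) = _
    rw [hfd.fderiv]
    simp [ContinuousLinearMap.prod_apply]
    ring
  have hRHS : sder w (fun q => mder u θ q) z
      = fderiv ℝ g z ((0:ℝ), w z) ((1:ℝ), u z)
        + g z ((0:ℝ), fderiv ℝ u z ((0:ℝ), w z)) := by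
    have hfd := (hgd z).hasFDerivAt.clm_apply hU
    rw [sder]
    show fderiv ℝ (fun q => g q ((1:ℝ), u q)) z ((0:ℝ), w z) = _
    rw [hfd.fderiv]
    simp [ContinuousLinearMap.prod_apply]
    ring
  have hsymm : fderiv ℝ g z ((1:ℝ), u z) ((0:ℝ), w z)
      = fderiv ℝ g z ((0:ℝ), w z) ((1:ℝ), u z) :=
    second_derivative_symmetric (fun y => (hθd y).hasFDerivAt)
      (hgd z).hasFDerivAt _ _
  rw [hLHS, hRHS, hsymm, hfz]
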